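/- A nonabelian limit group admits a surjective homomorphism onto a nonabelian free group; consequently, for a nonabelian limit group A, the rational vector space Hom(A, ℚ) has dimension at least 2. -/

import Mathlib

/-- A group is fully residually free if every finite subset can be mapped injectively
into a free group by a group homomorphism. -/
def IsFullyResiduallyFree (G : Type*) [Group G] : Prop :=
  ∀ S : Finset G, ∃ (ι : Type) (φ : G →* FreeGroup ι), Set.InjOn φ ↑S

/-- A limit group is a finitely generated fully residually free group. -/
def IsLimitGroup (G : Type*) [Group G] : Prop :=
  Group.FG G ∧ IsFullyResiduallyFree G

/-- Over a subsingleton index type, the free group is commutative. -/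
theorem freeGroup_commute_of_subsingleton {κ : Type*} [Subsingleton κ]
    (a b : FreeGroup κ) : Commute a b := by
  induction a using FreeGroup.induction_on with
  | C1 => exact Commute.one_left b
  | of i =>
    induction b using FreeGroup.induction_on with
    | C1 => exact Commute.one_right _
    | of j => rw [Subsingleton.elim i j]
    | inv_of j h => exact h.inv_right
    | mul x y hx hy => exact hx.mul_right hy
  | inv_of i h => exact h.inv_left
  | mul x y hx hy => exact hx.mul_left hy

/-- **Nonabelian limit groups surject onto nonabelian free groups.**
A nonabelian limit group `A` admits a surjective homomorphism onto a free group of rank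
at least `2`; consequently the `ℚ`-vector space `Hom(A, ℚ)` has dimension at least `2`,
i.e. there exist two homomorphisms `A → ℚ` which are linearly independent over `ℚ`. -/
theorem nonabelian_limit_group_surjects_free {A : Type*} [Group A]
    (hA : IsLimitGroup A) (hnab : ¬∀ x y : A, x * y = y * x) :
    (∃ (ι : Type) (i j : ι), i ≠ j ∧ ∃ f : A →* FreeGroup ι, Function.Surjective f) ∧
    (∃ f₁ f₂ : A →* Multiplicative ℚ, ∀ q₁ q₂ : ℚ,
      (∀ x : A, q₁ * Multiplicative.toAdd (f₁ x) + q₂ * Multiplicative.toAdd (f₂ x) = 0) →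
      q₁ = 0 ∧ q₂ = 0) := by
  classical
  push_neg at hnab
  obtain ⟨x, y, hxy⟩ := hnab
  -- get a hom injective on {x*y, y*x}
  obtain ⟨ι₀, φ, hφ⟩ := hA.2 {x * y, y * x}
  have hne : φ (x * y) ≠ φ (y * x) := by
    intro h
    exact hxy (hφ (by simp) (by simp) h)
  -- the range of φ is a free group (Nielsen–Schreier)
  let H : Subgroup (FreeGroup ι₀) := φ.range
  haveI : IsFreeGroup H := inferInstance
  let ι := IsFreeGroup.Generators H
  let e : H ≃* FreeGroup ι := IsFreeGroup.toFreeGroup H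
  let f : A →* FreeGroup ι := e.toMonoidHom.comp φ.rangeRestrict
  have hfsurj : Function.Surjective f := by
    exact e.surjective.comp φ.rangeRestrict_surjective
  have hfne : f (x * y) ≠ f (y * x) := by
    intro h
    apply hne
    have : φ.rangeRestrict (x * y) = φ.rangeRestrict (y * x) := e.injective h
    exact congrArg Subtype.val this
  -- hence ι has two distinct elements
  have hij : ∃ i j : ι, i ≠ j := by
    by_contra hcon
    push_neg at hcon
    haveI : Subsingleton ι := ⟨hcon⟩
    apply hfne
    have := freeGroup_commute_of_subsingleton (f x) (f y)
    simp only [map_mul]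
    exact this
  obtain ⟨i, j, hijne⟩ := hij
  refine ⟨⟨ι, i, j, hijne, f, hfsurj⟩, ?_⟩
  -- second part: homs to ℚ
  let g : ι → FreeGroup ι →* Multiplicative ℚ := fun k =>
    FreeGroup.lift (fun t => if t = k then Multiplicative.ofAdd (1 : ℚ) else 1)
  refine ⟨(g i).comp f, (g j).comp f, fun q₁ q₂ hq => ?_⟩
  obtain ⟨a, ha⟩ := hfsurj (FreeGroup.of i)
  obtain ⟨b, hb⟩ := hfsurj (FreeGroup.of j)
  have h1 := hq a
  have h2 := hq b
  simp [g, ha, hb, hijne, Ne.symm hijne] at h1 h2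
  exact ⟨h1, h2⟩
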